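/- The class of successful formulas is not closed under prefixing with a possibility operator in the multi-agent case: L_1 K_a K_b L_1 p is successful in S5, but L_2 L_1 K_a K_b L_1 p is unsuccessful. -/

import Mathlib

/-- Formulas of public announcement logic over agent type `A` and atoms `P`. -/
inductive Form (A P : Type) : Type where
  | atom : P → Form A P
  | neg  : Form A P → Form A P
  | and  : Form A P → Form A P → Form A P
  | or   : Form A P → Form A P → Form A P
  | K    : A → Form A P → Form A P
  | ann  : Form A P → Form A P → Form A P

/-- The possibility operator `L_a φ := ¬ K_a ¬ φ`. -/
def Form.L {A P : Type} (a : A) (φ : Form A P) : Form A P := .neg (.K a (.neg φ))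

/-- An S5 epistemic model: worlds, an equivalence relation per agent, a valuation. -/
structure Model (A P : Type) where
  W : Type
  R : A → W → W → Prop
  equiv : ∀ a, Equivalence (R a)
  V : P → W → Prop

/-- Restriction (submodel) of a model to the worlds satisfying `S`. -/
def Model.restrict {A P : Type} (M : Model A P) (S : M.W → Prop) : Model A P where
  W := {w : M.W // S w}
  R a u v := M.R a u.1 v.1
  equiv a := ⟨fun _ => (M.equiv a).refl _, fun h => (M.equiv a).symm h,
              fun h h' => (M.equiv a).trans h h'⟩
  V p w := M.V p w.1

/-- Truth of a formula at a world of a model. -/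
def sat {A P : Type} : (M : Model A P) → M.W → Form A P → Prop
  | M, w, .atom p => M.V p w
  | M, w, .neg φ => ¬ sat M w φ
  | M, w, .and φ ψ => sat M w φ ∧ sat M w ψ
  | M, w, .or φ ψ => sat M w φ ∨ sat M w ψ
  | M, w, .K a φ => ∀ v, M.R a w v → sat M v φ
  | M, w, .ann φ ψ => ∀ h : sat M w φ, sat (M.restrict (fun v => sat M v φ)) ⟨w, h⟩ ψ

/-- A formula is successful iff it remains true after being announced. -/
def successful {A P : Type} (φ : Form A P) : Prop :=
  ∀ (M : Model A P) (w : M.W) (h : sat M w φ),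
    sat (M.restrict (fun v => sat M v φ)) ⟨w, h⟩ φ

/-- Purely propositional formulas (no epistemic or announcement operators). -/
def Form.isProp {A P : Type} : Form A P → Prop
  | .atom _ => True
  | .neg φ => φ.isProp
  | .and φ ψ => φ.isProp ∧ ψ.isProp
  | .or φ ψ => φ.isProp ∧ ψ.isProp
  | .K _ _ => False
  | .ann _ _ => False

/-- Prefix a formula with a sequence of `K` operators. -/
def Kseq {A P : Type} (l : List A) (φ : Form A P) : Form A P := l.foldr .K φ

/-- Prefix a formula with a sequence of `L` operators. -/
def Lseq {A P : Type} (l : List A) (φ : Form A P) : Form A P := l.foldr Form.L φ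

/-- Prefix a formula with a sequence of epistemic operators:
`(a, true)` stands for `K_a` and `(a, false)` for `L_a`. -/
def Eseq {A P : Type} (l : List (A × Bool)) (φ : Form A P) : Form A P :=
  l.foldr (fun e ψ => if e.2 then .K e.1 ψ else Form.L e.1 ψ) φ

/-! ### Auxiliary material for the proof -/

/-- Decidability of implications from decidability of both sides. -/
def decImp {p q : Prop} (dp : Decidable p) (dq : Decidable q) : Decidable (p → q) :=
  match dp, dq with
  | _, isTrue hq => isTrue fun _ => hq
  | isFalse hp, _ => isTrue fun h => absurd h hp
  | isTrue hp, isFalse hq => isFalse fun h => hq (h hp)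

/-- Truth in a finite model with decidable relations and valuation is decidable. -/
def decSat {A P : Type} :
    (M : Model A P) → (f : Fintype M.W) →
    (iR : ∀ a u v, Decidable (M.R a u v)) → (iV : ∀ p w, Decidable (M.V p w)) →
    (φ : Form A P) → (w : M.W) → Decidable (sat M w φ)
  | M, f, iR, iV, .atom p, w => iV p w
  | M, f, iR, iV, .neg φ, w => @instDecidableNot _ (decSat M f iR iV φ w)
  | M, f, iR, iV, .and φ ψ, w =>
      @instDecidableAnd _ _ (decSat M f iR iV φ w) (decSat M f iR iV ψ w)
  | M, f, iR, iV, .or φ ψ, w =>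
      @instDecidableOr _ _ (decSat M f iR iV φ w) (decSat M f iR iV ψ w)
  | M, f, iR, iV, .K a φ, w =>
      @Fintype.decidableForallFintype _ _
        (fun v => decImp (iR a w v) (decSat M f iR iV φ v)) f
  | M, f, iR, iV, .ann φ ψ, w =>
      match decSat M f iR iV φ w with
      | isFalse h => isTrue (fun h' => absurd h' h)
      | isTrue h =>
          haveI : DecidablePred (fun v => sat M v φ) := decSat M f iR iV φ
          haveI : Fintype M.W := f
          match decSat (M.restrict (fun v => sat M v φ)) (Subtype.fintype _)
              (fun a u v => iR a u.1 v.1) (fun p u => iV p u.1) ψ ⟨w, h⟩ with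
          | isTrue h' => isTrue (fun _ => h')
          | isFalse h' => isFalse (fun k => h' (k h))

/-- Partition data for the counter-model: agents `1 = 0`, `2 = 1`, `a = 2`, `b = 3`,
worlds `w = 0`, `v = 1`, `q = 2`, `m = 3`, `z = 4`. -/
def cls : Fin 4 → Fin 5 → Fin 4
  | 0, 0 => 0 | 0, 1 => 1 | 0, 2 => 2 | 0, 3 => 2 | 0, 4 => 3
  | 1, 0 => 0 | 1, 1 => 0 | 1, 2 => 0 | 1, 3 => 1 | 1, 4 => 2
  | 2, 0 => 0 | 2, 1 => 1 | 2, 2 => 2 | 2, 3 => 2 | 2, 4 => 2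
  | 3, 0 => 0 | 3, 1 => 1 | 3, 2 => 1 | 3, 3 => 2 | 3, 4 => 3

/-- The counter-model. -/
def M₀ : Model (Fin 4) Unit where
  W := Fin 5
  R a u v := cls a u = cls a v
  equiv _ := ⟨fun _ => rfl, Eq.symm, Eq.trans⟩
  V _ w := w = 1 ∨ w = 3

instance instDecSatM₀ (w : M₀.W) (φ : Form (Fin 4) Unit) : Decidable (sat M₀ w φ) :=
  decSat M₀ (inferInstanceAs (Fintype (Fin 5)))
    (fun a u v => inferInstanceAs (Decidable (cls a u = cls a v)))
    (fun _ w => inferInstanceAs (Decidable ((show Fin 5 from w) = 1 ∨ (show Fin 5 from w) = 3))) φ w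

instance instDecSatM₀' (S : M₀.W → Prop) [iS : DecidablePred S]
    (w : (M₀.restrict S).W) (φ : Form (Fin 4) Unit) :
    Decidable (sat (M₀.restrict S) w φ) :=
  decSat (M₀.restrict S)
    (@Subtype.fintype _ _ iS (inferInstanceAs (Fintype (Fin 5))))
    (fun a u v => inferInstanceAs (Decidable (cls a u.1 = cls a v.1)))
    (fun _ w => inferInstanceAs (Decidable ((show Fin 5 from w.1) = 1 ∨ (show Fin 5 from w.1) = 3))) φ w

/-- `L_1 K_a K_b L_1 p` is successful. -/
theorem part1 : successful (Form.L (0 : Fin 4) (.K 2 (.K 3 (Form.L 0 (.atom ()))))) := by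
  intro M w h
  set ψ : Form (Fin 4) Unit := .K 2 (.K 3 (Form.L 0 (.atom ()))) with hψdef
  -- extract a witness of the outer possibility
  have hex : ∃ v, M.R 0 w v ∧ sat M v ψ := by
    by_contra hc
    push_neg at hc
    apply h
    intro v hrv hsv
    exact hc v hrv hsv
  obtain ⟨v, hr, hψ⟩ := hex
  -- the witness survives the announcement
  have hvS : sat M v (Form.L (0 : Fin 4) ψ) := by
    intro hk
    exact hk v ((M.equiv 0).refl v) hψ
  -- show the formula in the restricted model
  intro hk
  refine hk ⟨v, hvS⟩ hr ?_
  -- goal: ψ holds at v in the restricted model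
  intro u hru t hrt hK
  refine hψ u.1 hru t.1 hrt ?_
  intro s hrs hVs
  -- s satisfies the announced formula since it is 1-related to t
  have hφs : sat M s (Form.L (0 : Fin 4) ψ) := by
    intro hk'
    apply t.2
    intro v' hrv' hsv'
    exact hk' v' ((M.equiv 0).trans ((M.equiv 0).symm hrs) hrv') hsv'
  exact hK ⟨s, hφs⟩ hrs hVs

/-- The unsuccessful formula `L_2 L_1 K_a K_b L_1 p`. -/
def Θ : Form (Fin 4) Unit :=
  Form.L (1 : Fin 4) (Form.L 0 (.K 2 (.K 3 (Form.L 0 (.atom ())))))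

lemma hθ : sat M₀ (show M₀.W from (0 : Fin 5)) Θ := by decide

lemma hθ' : ¬ sat (M₀.restrict (fun v => sat M₀ v Θ))
    ⟨show M₀.W from (0 : Fin 5), hθ⟩ Θ := by
  exact @of_decide_eq_true _ (@instDecidableNot _ (@instDecSatM₀' (fun v => sat M₀ v Θ) (fun v => instDecSatM₀ v Θ) _ Θ)) rfl

/-- Successful formulas are not closed under prefixing with a possibility operator:
`L_1 K_a K_b L_1 p` is successful but `L_2 L_1 K_a K_b L_1 p` is not.
(Agents: `1 = 0`, `2 = 1`, `a = 2`, `b = 3` in `Fin 4`.) -/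
theorem successful_not_closed_under_L :
    successful (Form.L (0 : Fin 4) (.K 2 (.K 3 (Form.L 0 (.atom ()))))) ∧
    ¬ successful (Form.L (1 : Fin 4)
        (Form.L 0 (.K 2 (.K 3 (Form.L 0 (.atom ())))))) := by
  constructor
  · exact part1
  · intro hs
    exact hθ' (hs M₀ _ hθ)
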